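/- Wedin's sin-Theta theorem (as restated in the paper): Let A and Ã be real m×n matrices. Suppose [U₁ U₂ U₃] ∈ ℝ^{m×m} and [V₁ V₂] ∈ ℝ^{n×n} are orthogonal matrices such that U₁ᵀAV₁ = Σ₁ and U₂ᵀAV₂ = Σ₂ are diagonal with nonnegative entries while U₁ᵀAV₂ = 0, U₂ᵀAV₁ = 0, U₃ᵀAV₁ = 0, and U₃ᵀAV₂ = 0, and similarly [Ũ₁ Ũ₂ Ũ₃] and [Ṽ₁ Ṽ₂] are orthogonal with Ũ₁ᵀÃṼ₁ = Σ̃₁ and Ũ₂ᵀÃṼ₂ = Σ̃₂ diagonal with nonnegative entries and the corresponding off-diagonal blocks zero. Suppose there is δ > 0 such that every diagonal entry of Σ̃₁ differs from every diagonal entry of Σ₂ by at least δ, and every diagonal entry of Σ̃₁ is at least δ. Define R = AṼ₁ − Ũ₁Σ̃₁, S = AᵀŨ₁ − Ṽ₁Σ̃₁, U₁⊥ = [U₂ U₃], and V₁⊥ = V₂. Then √(‖U₁⊥ᵀŨ₁‖_F² + ‖V₁⊥ᵀṼ₁‖_F²) ≤ √(‖R‖_F² + ‖S‖_F²)/δ.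 -/

import Mathlib

open Matrix

/-- Frobenius norm of a real matrix. -/
noncomputable def frobNorm {m n : Type*} [Fintype m] [Fintype n] (M : Matrix m n ℝ) : ℝ :=
  Real.sqrt (∑ i, ∑ j, (M i j) ^ 2)

/-- A (possibly rectangular) matrix is "diagonal with nonnegative entries":
off-diagonal entries vanish and diagonal entries are nonnegative. -/
def RectDiagNonneg {a b : ℕ} (M : Matrix (Fin a) (Fin b) ℝ) : Prop :=
  (∀ (i : Fin a) (j : Fin b), (i : ℕ) ≠ (j : ℕ) → M i j = 0) ∧
  (∀ (i : Fin a) (j : Fin b), (i : ℕ) = (j : ℕ) → 0 ≤ M i j)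

noncomputable def sqF {a b : Type*} [Fintype a] [Fintype b] (M : Matrix a b ℝ) : ℝ :=
  ∑ i, ∑ j, (M i j) ^ 2

lemma sqF_nonneg {a b : Type*} [Fintype a] [Fintype b] (M : Matrix a b ℝ) : 0 ≤ sqF M := by
  apply Finset.sum_nonneg; intro i _; apply Finset.sum_nonneg; intro j _; positivity

lemma sqF_fromRows {a b c : Type*} [Fintype a] [Fintype b] [Fintype c]
    (M : Matrix a c ℝ) (N : Matrix b c ℝ) : sqF (fromRows M N) = sqF M + sqF N := by
  simp [sqF, Fintype.sum_sum_type, fromRows_apply_inl, fromRows_apply_inr]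

lemma sqF_eq_trace {a b : Type*} [Fintype a] [Fintype b] (M : Matrix a b ℝ) :
    sqF M = Matrix.trace (Mᵀ * M) := by
  rw [sqF, Finset.sum_comm]
  simp [Matrix.trace, Matrix.diag, mul_apply, sq]

lemma sqF_orth {a b c : Type*} [Fintype a] [Fintype b] [Fintype c] [DecidableEq a]
    (W : Matrix a b ℝ) (hW : W * Wᵀ = 1) (R : Matrix a c ℝ) : sqF (Wᵀ * R) = sqF R := by
  rw [sqF_eq_trace, sqF_eq_trace, Matrix.transpose_mul, Matrix.transpose_transpose,
    Matrix.mul_assoc, ← Matrix.mul_assoc W, hW, Matrix.one_mul]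

lemma key_scalar (δ σ s p y : ℝ) (hδ : 0 ≤ δ) (hσ : δ ≤ σ) (hs : 0 ≤ s)
    (hsep : δ ≤ |σ - s|) :
    δ ^ 2 * (p ^ 2 + y ^ 2) ≤ (s * y - p * σ) ^ 2 + (s * p - y * σ) ^ 2 := by
  have h1 : δ ^ 2 ≤ (σ - s) ^ 2 := by
    rw [← sq_abs (σ - s)]
    exact pow_le_pow_left₀ hδ hsep 2
  have hσ0 : 0 ≤ σ := hδ.trans hσ
  nlinarith [mul_nonneg (mul_nonneg hs hσ0) (sq_nonneg (p - y)), sq_nonneg p, sq_nonneg y,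
    mul_le_mul_of_nonneg_right h1 (add_nonneg (sq_nonneg p) (sq_nonneg y))]

lemma mul_diag_right {q r : ℕ} (P : Matrix (Fin q) (Fin r) ℝ) (D : Matrix (Fin r) (Fin r) ℝ)
    (hD : ∀ (i j : Fin r), (i : ℕ) ≠ (j : ℕ) → D i j = 0) (i : Fin q) (j : Fin r) :
    (P * D) i j = P i j * D j j := by
  rw [Matrix.mul_apply]
  apply Finset.sum_eq_single_of_mem j (Finset.mem_univ j)
  intro b _ hb
  rw [hD b j (fun h => hb (Fin.eq_of_val_eq h)), mul_zero]

lemma diag_mul_left {q l r : ℕ} (D : Matrix (Fin q) (Fin l) ℝ)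
    (hD : ∀ (i : Fin q) (j : Fin l), (i : ℕ) ≠ (j : ℕ) → D i j = 0)
    (Y : Matrix (Fin l) (Fin r) ℝ) (i : Fin q) (j : Fin r) :
    (D * Y) i j = if h : (i : ℕ) < l then D i ⟨i, h⟩ * Y ⟨i, h⟩ j else 0 := by
  rw [Matrix.mul_apply]
  split_ifs with h
  · apply Finset.sum_eq_single_of_mem ((⟨(i : ℕ), h⟩ : Fin l)) (Finset.mem_univ _)
    intro b _ hb
    rw [hD i b (fun he => hb (Fin.eq_of_val_eq he.symm)), zero_mul]
  · apply Finset.sum_eq_zero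
    intro b _
    rw [hD i b (fun he => h (he ▸ b.isLt)), zero_mul]

lemma col_bound (δ σ : ℝ) (hδ : 0 < δ) (hσ : δ ≤ σ) (k l : ℕ)
    (p y s : ℕ → ℝ)
    (hp : ∀ i, k ≤ i → p i = 0) (hy : ∀ i, l ≤ i → y i = 0)
    (hs0 : ∀ i, ¬(i < k ∧ i < l) → s i = 0)
    (hsnn : ∀ i, 0 ≤ s i) (hsep : ∀ i, i < k → i < l → δ ≤ |σ - s i|) :
    δ ^ 2 * ((∑ i ∈ Finset.range k, (p i) ^ 2) + (∑ i ∈ Finset.range l, (y i) ^ 2))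
      ≤ (∑ i ∈ Finset.range k, (s i * y i - p i * σ) ^ 2)
        + (∑ i ∈ Finset.range l, (s i * p i - y i * σ) ^ 2) := by
  set N := max k l with hN
  have hkN : Finset.range k ⊆ Finset.range N := Finset.range_subset_range.2 (le_max_left k l)
  have hlN : Finset.range l ⊆ Finset.range N := Finset.range_subset_range.2 (le_max_right k l)
  have e1 : ∑ i ∈ Finset.range k, (p i) ^ 2 = ∑ i ∈ Finset.range N, (p i) ^ 2 :=
    Finset.sum_subset hkN (fun i _ hi => by
      rw [hp i (by simpa using hi)]; ring)
  have e2 : ∑ i ∈ Finset.range l, (y i) ^ 2 = ∑ i ∈ Finset.range N, (y i) ^ 2 :=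
    Finset.sum_subset hlN (fun i _ hi => by
      rw [hy i (by simpa using hi)]; ring)
  have e3 : ∑ i ∈ Finset.range k, (s i * y i - p i * σ) ^ 2
      = ∑ i ∈ Finset.range N, (s i * y i - p i * σ) ^ 2 :=
    Finset.sum_subset hkN (fun i _ hi => by
      have hik : k ≤ i := by simpa using hi
      rw [hp i hik, hs0 i (fun hc => absurd hc.1 (not_lt.2 hik))]; ring)
  have e4 : ∑ i ∈ Finset.range l, (s i * p i - y i * σ) ^ 2
      = ∑ i ∈ Finset.range N, (s i * p i - y i * σ) ^ 2 :=
    Finset.sum_subset hlN (fun i _ hi => by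
      have hil : l ≤ i := by simpa using hi
      rw [hy i hil, hs0 i (fun hc => absurd hc.2 (not_lt.2 hil))]; ring)
  rw [e1, e2, e3, e4, ← Finset.sum_add_distrib, ← Finset.sum_add_distrib, Finset.mul_sum]
  apply Finset.sum_le_sum
  intro i _
  by_cases h : i < k ∧ i < l
  · exact key_scalar δ σ (s i) (p i) (y i) hδ.le hσ (hsnn i) (hsep i h.1 h.2)
  · have hsz : s i = 0 := hs0 i h
    refine key_scalar δ σ (s i) (p i) (y i) hδ.le hσ (hsnn i) ?_
    rw [hsz, sub_zero, abs_of_nonneg (hδ.le.trans hσ)]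
    exact hσ
lemma sqF_comm {a b : Type*} [Fintype a] [Fintype b] (M : Matrix a b ℝ) :
    sqF M = ∑ j, ∑ i, (M i j) ^ 2 := by
  rw [sqF, Finset.sum_comm]

lemma sqF_neg {a b : Type*} [Fintype a] [Fintype b] (M : Matrix a b ℝ) :
    sqF (-M) = sqF M := by
  simp [sqF]
lemma mul_resolve₂ {m n a b c : Type*} [Fintype n] [Fintype a] [Fintype b] [Fintype c]
    [DecidableEq n]
    (A : Matrix m n ℝ) (V₁ : Matrix n a ℝ) (V₂ : Matrix n b ℝ) (T : Matrix n c ℝ)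
    (h : V₁ * V₁ᵀ + V₂ * V₂ᵀ = 1) :
    A * T = A * V₁ * (V₁ᵀ * T) + A * V₂ * (V₂ᵀ * T) := by
  have h2 := congrArg (fun M => A * (M * T)) h
  simpa [Matrix.mul_add, Matrix.add_mul, Matrix.mul_assoc] using h2.symm

lemma mul_resolve₃ {m n a b c d : Type*} [Fintype n] [Fintype a] [Fintype b] [Fintype c]
    [Fintype d] [DecidableEq n]
    (A : Matrix m n ℝ) (U₁ : Matrix n a ℝ) (U₂ : Matrix n b ℝ) (U₃ : Matrix n c ℝ)
    (T : Matrix n d ℝ)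
    (h : U₁ * U₁ᵀ + (U₂ * U₂ᵀ + U₃ * U₃ᵀ) = 1) :
    A * T = A * U₁ * (U₁ᵀ * T) + (A * U₂ * (U₂ᵀ * T) + A * U₃ * (U₃ᵀ * T)) := by
  have h2 := congrArg (fun M => A * (M * T)) h
  simpa [Matrix.mul_add, Matrix.add_mul, Matrix.mul_assoc] using h2.symm
set_option maxHeartbeats 2000000 in
/-- Wedin's sin-Θ theorem (as restated in the paper). -/
theorem wedin_sin_theta
    {m n k₁ k₂ k₃ l₁ l₂ r tk₂ tk₃ tl₂ : ℕ}
    (A At : Matrix (Fin m) (Fin n) ℝ)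
    (U₁ : Matrix (Fin m) (Fin k₁) ℝ) (U₂ : Matrix (Fin m) (Fin k₂) ℝ)
    (U₃ : Matrix (Fin m) (Fin k₃) ℝ)
    (V₁ : Matrix (Fin n) (Fin l₁) ℝ) (V₂ : Matrix (Fin n) (Fin l₂) ℝ)
    (tU₁ : Matrix (Fin m) (Fin r) ℝ) (tU₂ : Matrix (Fin m) (Fin tk₂) ℝ)
    (tU₃ : Matrix (Fin m) (Fin tk₃) ℝ)
    (tV₁ : Matrix (Fin n) (Fin r) ℝ) (tV₂ : Matrix (Fin n) (Fin tl₂) ℝ)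
    -- [U₁ U₂ U₃] is orthogonal
    (hUo : (fromCols U₁ (fromCols U₂ U₃))ᵀ * fromCols U₁ (fromCols U₂ U₃) = 1)
    (hUo' : fromCols U₁ (fromCols U₂ U₃) * (fromCols U₁ (fromCols U₂ U₃))ᵀ = 1)
    -- [V₁ V₂] is orthogonal
    (hVo : (fromCols V₁ V₂)ᵀ * fromCols V₁ V₂ = 1)
    (hVo' : fromCols V₁ V₂ * (fromCols V₁ V₂)ᵀ = 1)
    -- [Ũ₁ Ũ₂ Ũ₃] is orthogonal
    (htUo : (fromCols tU₁ (fromCols tU₂ tU₃))ᵀ * fromCols tU₁ (fromCols tU₂ tU₃) = 1)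
    (htUo' : fromCols tU₁ (fromCols tU₂ tU₃) * (fromCols tU₁ (fromCols tU₂ tU₃))ᵀ = 1)
    -- [Ṽ₁ Ṽ₂] is orthogonal
    (htVo : (fromCols tV₁ tV₂)ᵀ * fromCols tV₁ tV₂ = 1)
    (htVo' : fromCols tV₁ tV₂ * (fromCols tV₁ tV₂)ᵀ = 1)
    -- block structure of A
    (hS1 : RectDiagNonneg (U₁ᵀ * A * V₁))
    (hS2 : RectDiagNonneg (U₂ᵀ * A * V₂))
    (hZ₁ : U₁ᵀ * A * V₂ = 0) (hZ₂ : U₂ᵀ * A * V₁ = 0)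
    (hZ₃ : U₃ᵀ * A * V₁ = 0) (hZ₄ : U₃ᵀ * A * V₂ = 0)
    -- block structure of Ã
    (htS1 : RectDiagNonneg (tU₁ᵀ * At * tV₁))
    (htS2 : RectDiagNonneg (tU₂ᵀ * At * tV₂))
    (htZ₁ : tU₁ᵀ * At * tV₂ = 0) (htZ₂ : tU₂ᵀ * At * tV₁ = 0)
    (htZ₃ : tU₃ᵀ * At * tV₁ = 0) (htZ₄ : tU₃ᵀ * At * tV₂ = 0)
    (δ : ℝ) (hδ : 0 < δ)
    -- every diagonal entry of Σ̃₁ differs from every diagonal entry of Σ₂ by at least δ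
    (hsep : ∀ (i : Fin r) (j : Fin r) (i' : Fin k₂) (j' : Fin l₂),
      (i : ℕ) = (j : ℕ) → (i' : ℕ) = (j' : ℕ) →
        δ ≤ |(tU₁ᵀ * At * tV₁) i j - (U₂ᵀ * A * V₂) i' j'|)
    -- every diagonal entry of Σ̃₁ is at least δ
    (hmin : ∀ (i : Fin r) (j : Fin r), (i : ℕ) = (j : ℕ) → δ ≤ (tU₁ᵀ * At * tV₁) i j) :
    -- conclusion with R = AṼ₁ − Ũ₁Σ̃₁, S = AᵀŨ₁ − Ṽ₁Σ̃₁, U₁⊥ = [U₂ U₃], V₁⊥ = V₂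
    Real.sqrt (frobNorm ((fromCols U₂ U₃)ᵀ * tU₁) ^ 2 + frobNorm (V₂ᵀ * tV₁) ^ 2) ≤
      Real.sqrt (frobNorm (A * tV₁ - tU₁ * (tU₁ᵀ * At * tV₁)) ^ 2 +
        frobNorm (Aᵀ * tU₁ - tV₁ * (tU₁ᵀ * At * tV₁)) ^ 2) / δ := by
  classical
  -- completeness relations
  have hVsum : V₁ * V₁ᵀ + V₂ * V₂ᵀ = (1 : Matrix (Fin n) (Fin n) ℝ) := by
    simpa only [transpose_fromCols, fromCols_mul_fromRows] using hVo'
  have hUsum : U₁ * U₁ᵀ + (U₂ * U₂ᵀ + U₃ * U₃ᵀ) = (1 : Matrix (Fin m) (Fin m) ℝ) := by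
    simpa only [transpose_fromCols, fromCols_mul_fromRows] using hUo'
  -- transposed zero blocks
  have hz1' : V₂ᵀ * Aᵀ * U₁ = 0 := by
    have h2 := congrArg Matrix.transpose hZ₁
    simpa [Matrix.transpose_mul, Matrix.mul_assoc] using h2
  have hz4' : V₂ᵀ * Aᵀ * U₃ = 0 := by
    have h2 := congrArg Matrix.transpose hZ₄
    simpa [Matrix.transpose_mul, Matrix.mul_assoc] using h2
  have hTr : V₂ᵀ * Aᵀ * U₂ = (U₂ᵀ * A * V₂)ᵀ := by
    simp [Matrix.transpose_mul, Matrix.mul_assoc]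
  -- block identities
  have e2 : U₂ᵀ * (A * tV₁ - tU₁ * (tU₁ᵀ * At * tV₁))
      = (U₂ᵀ * A * V₂) * (V₂ᵀ * tV₁) - (U₂ᵀ * tU₁) * (tU₁ᵀ * At * tV₁) := by
    rw [Matrix.mul_sub, mul_resolve₂ A V₁ V₂ tV₁ hVsum, Matrix.mul_add]
    simp only [← Matrix.mul_assoc, hZ₂, Matrix.zero_mul, zero_add]
  have e3 : U₃ᵀ * (A * tV₁ - tU₁ * (tU₁ᵀ * At * tV₁))
      = -((U₃ᵀ * tU₁) * (tU₁ᵀ * At * tV₁)) := by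
    rw [Matrix.mul_sub, mul_resolve₂ A V₁ V₂ tV₁ hVsum, Matrix.mul_add]
    simp only [← Matrix.mul_assoc, hZ₃, hZ₄, Matrix.zero_mul, zero_add, add_zero, zero_sub]
  have e4 : V₂ᵀ * (Aᵀ * tU₁ - tV₁ * (tU₁ᵀ * At * tV₁))
      = (U₂ᵀ * A * V₂)ᵀ * (U₂ᵀ * tU₁) - (V₂ᵀ * tV₁) * (tU₁ᵀ * At * tV₁) := by
    rw [Matrix.mul_sub, mul_resolve₃ Aᵀ U₁ U₂ U₃ tU₁ hUsum, Matrix.mul_add, Matrix.mul_add]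
    simp only [← Matrix.mul_assoc, hz1', hz4', Matrix.zero_mul, zero_add, add_zero, hTr]
  -- abbreviations
  set E := tU₁ᵀ * At * tV₁ with hE
  set G := U₂ᵀ * A * V₂ with hG
  set P := U₂ᵀ * tU₁ with hP
  set Q := U₃ᵀ * tU₁ with hQ
  set Y := V₂ᵀ * tV₁ with hY
  have hdiag : ∀ (a b : Fin r), (a : ℕ) ≠ (b : ℕ) → E a b = 0 := htS1.1
  have hGdiagT : ∀ (a : Fin l₂) (b : Fin k₂), (a : ℕ) ≠ (b : ℕ) → Gᵀ a b = 0 :=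
    fun a b hab => hS2.1 b a (Ne.symm hab)
  -- per-column bounds for P, Y
  have hcol : ∀ j : Fin r,
      δ ^ 2 * ((∑ i, (P i j) ^ 2) + (∑ i, (Y i j) ^ 2))
        ≤ (∑ i, ((G * Y - P * E) i j) ^ 2) + (∑ i, ((Gᵀ * P - Y * E) i j) ^ 2) := by
    intro j
    have hσ : δ ≤ E j j := hmin j j rfl
    set pf : ℕ → ℝ := fun i => if h : i < k₂ then P ⟨i, h⟩ j else 0 with hpf
    set yf : ℕ → ℝ := fun i => if h : i < l₂ then Y ⟨i, h⟩ j else 0 with hyf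
    set sf : ℕ → ℝ := fun i => if h : i < k₂ ∧ i < l₂ then G ⟨i, h.1⟩ ⟨i, h.2⟩ else 0 with hsf
    have hb := col_bound δ (E j j) hδ hσ k₂ l₂ pf yf sf
      (fun i hi => dif_neg (by omega))
      (fun i hi => dif_neg (by omega))
      (fun i hi => dif_neg hi)
      (fun i => by
        by_cases h : i < k₂ ∧ i < l₂
        · rw [hsf]; dsimp only; rw [dif_pos h]; exact hS2.2 ⟨i, h.1⟩ ⟨i, h.2⟩ rfl
        · rw [hsf]; dsimp only; rw [dif_neg h])
      (fun i h1 h2 => by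
        rw [hsf]; dsimp only; rw [dif_pos ⟨h1, h2⟩]
        exact hsep j j ⟨i, h1⟩ ⟨i, h2⟩ rfl rfl)
    have c1 : (∑ i, (P i j) ^ 2) = ∑ i ∈ Finset.range k₂, (pf i) ^ 2 := by
      rw [← Fin.sum_univ_eq_sum_range (fun i => (pf i) ^ 2) k₂]
      exact Finset.sum_congr rfl (fun i _ => by rw [hpf]; dsimp only; rw [dif_pos i.isLt])
    have c2 : (∑ i, (Y i j) ^ 2) = ∑ i ∈ Finset.range l₂, (yf i) ^ 2 := by
      rw [← Fin.sum_univ_eq_sum_range (fun i => (yf i) ^ 2) l₂]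
      exact Finset.sum_congr rfl (fun i _ => by rw [hyf]; dsimp only; rw [dif_pos i.isLt])
    have c3 : (∑ i, ((G * Y - P * E) i j) ^ 2)
        = ∑ i ∈ Finset.range k₂, (sf i * yf i - pf i * (E j j)) ^ 2 := by
      rw [← Fin.sum_univ_eq_sum_range (fun i => (sf i * yf i - pf i * (E j j)) ^ 2) k₂]
      refine Finset.sum_congr rfl (fun i _ => ?_)
      rw [Matrix.sub_apply, diag_mul_left G hS2.1 Y i j, mul_diag_right P E hdiag i j,
        hpf, hyf, hsf]
      dsimp only
      by_cases h : (i : ℕ) < l₂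
      · rw [dif_pos h, dif_pos ⟨i.isLt, h⟩, dif_pos h, dif_pos i.isLt]
      · rw [dif_neg h, dif_neg (fun hc => h hc.2), dif_neg h, dif_pos i.isLt]; ring
    have c4 : (∑ i, ((Gᵀ * P - Y * E) i j) ^ 2)
        = ∑ i ∈ Finset.range l₂, (sf i * pf i - yf i * (E j j)) ^ 2 := by
      rw [← Fin.sum_univ_eq_sum_range (fun i => (sf i * pf i - yf i * (E j j)) ^ 2) l₂]
      refine Finset.sum_congr rfl (fun i _ => ?_)
      rw [Matrix.sub_apply, diag_mul_left Gᵀ hGdiagT P i j, mul_diag_right Y E hdiag i j,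
        hpf, hyf, hsf]
      dsimp only
      by_cases h : (i : ℕ) < k₂
      · rw [dif_pos h, dif_pos ⟨h, i.isLt⟩, dif_pos h, dif_pos i.isLt]
        rw [Matrix.transpose_apply]
      · rw [dif_neg h, dif_neg (fun hc => h hc.1), dif_neg h, dif_pos i.isLt]; ring
    rw [c1, c2, c3, c4]
    exact hb
  -- per-column bound for Q
  have hQcol : ∀ j : Fin r, δ ^ 2 * (∑ i, (Q i j) ^ 2) ≤ ∑ i, ((Q * E) i j) ^ 2 := by
    intro j
    have hσ : δ ≤ E j j := hmin j j rfl
    rw [Finset.mul_sum]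
    refine Finset.sum_le_sum (fun i _ => ?_)
    rw [mul_diag_right Q E hdiag i j]
    have h2 : δ ^ 2 ≤ (E j j) ^ 2 := by
      have h0 : (0:ℝ) ≤ δ := hδ.le
      nlinarith
    calc δ ^ 2 * Q i j ^ 2 ≤ (E j j) ^ 2 * Q i j ^ 2 :=
          mul_le_mul_of_nonneg_right h2 (sq_nonneg _)
      _ = (Q i j * E j j) ^ 2 := by ring
  -- summation over columns
  have hbig : δ ^ 2 * (sqF P + sqF Q + sqF Y)
      ≤ sqF (G * Y - P * E) + sqF (Q * E) + sqF (Gᵀ * P - Y * E) := by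
    have lhs_eq : δ ^ 2 * (sqF P + sqF Q + sqF Y)
        = ∑ j : Fin r, (δ ^ 2 * ((∑ i, (P i j) ^ 2) + (∑ i, (Y i j) ^ 2))
            + δ ^ 2 * (∑ i, (Q i j) ^ 2)) := by
      rw [sqF_comm P, sqF_comm Q, sqF_comm Y, ← Finset.sum_add_distrib,
        ← Finset.sum_add_distrib, Finset.mul_sum]
      exact Finset.sum_congr rfl (fun j _ => by ring)
    have rhs_eq : sqF (G * Y - P * E) + sqF (Q * E) + sqF (Gᵀ * P - Y * E)
        = ∑ j : Fin r, (((∑ i, ((G * Y - P * E) i j) ^ 2)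
            + (∑ i, ((Gᵀ * P - Y * E) i j) ^ 2)) + (∑ i, ((Q * E) i j) ^ 2)) := by
      rw [sqF_comm (G * Y - P * E), sqF_comm (Q * E), sqF_comm (Gᵀ * P - Y * E),
        ← Finset.sum_add_distrib, ← Finset.sum_add_distrib]
      exact Finset.sum_congr rfl (fun j _ => by ring)
    rw [lhs_eq, rhs_eq]
    exact Finset.sum_le_sum (fun j _ => add_le_add (hcol j) (hQcol j))
  -- relate to R and S blocks
  have hRval : sqF (U₂ᵀ * (A * tV₁ - tU₁ * E)) + sqF (U₃ᵀ * (A * tV₁ - tU₁ * E))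
      = sqF (G * Y - P * E) + sqF (Q * E) := by
    rw [e2, e3, sqF_neg]
  have hSval : sqF (V₂ᵀ * (Aᵀ * tU₁ - tV₁ * E)) = sqF (Gᵀ * P - Y * E) := by
    rw [e4]
  -- orthogonal invariance
  have hRfull : sqF (U₂ᵀ * (A * tV₁ - tU₁ * E)) + sqF (U₃ᵀ * (A * tV₁ - tU₁ * E))
      ≤ sqF (A * tV₁ - tU₁ * E) := by
    have h2 := sqF_orth (fromCols U₁ (fromCols U₂ U₃)) hUo' (A * tV₁ - tU₁ * E)
    rw [transpose_fromCols, transpose_fromCols, fromRows_mul, fromRows_mul,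
      sqF_fromRows, sqF_fromRows] at h2
    linarith [sqF_nonneg (U₁ᵀ * (A * tV₁ - tU₁ * E))]
  have hSfull : sqF (V₂ᵀ * (Aᵀ * tU₁ - tV₁ * E)) ≤ sqF (Aᵀ * tU₁ - tV₁ * E) := by
    have h2 := sqF_orth (fromCols V₁ V₂) hVo' (Aᵀ * tU₁ - tV₁ * E)
    rw [transpose_fromCols, fromRows_mul, sqF_fromRows] at h2
    linarith [sqF_nonneg (V₁ᵀ * (Aᵀ * tU₁ - tV₁ * E))]
  -- combine
  have hfinal : δ ^ 2 * (sqF P + sqF Q + sqF Y)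
      ≤ sqF (A * tV₁ - tU₁ * E) + sqF (Aᵀ * tU₁ - tV₁ * E) := by
    linarith [hbig, hRval, hSval, hRfull, hSfull]
  -- rewrite the goal via sqF
  have fr : ∀ {a b : Type} [Fintype a] [Fintype b] (M : Matrix a b ℝ),
      frobNorm M ^ 2 = sqF M := by
    intro a b _ _ M
    exact Real.sq_sqrt (sqF_nonneg M)
  have hfc : frobNorm ((fromCols U₂ U₃)ᵀ * tU₁) ^ 2 = sqF P + sqF Q := by
    rw [fr, transpose_fromCols, fromRows_mul, sqF_fromRows, hP, hQ]
  rw [hfc, fr (V₂ᵀ * tV₁), fr, fr, ← hY]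
  have hXnn : 0 ≤ sqF P + sqF Q + sqF Y := by
    have := sqF_nonneg P; have := sqF_nonneg Q; have := sqF_nonneg Y; linarith
  rw [le_div_iff₀ hδ]
  have hmul : Real.sqrt (sqF P + sqF Q + sqF Y) * δ
      = Real.sqrt ((sqF P + sqF Q + sqF Y) * δ ^ 2) := by
    rw [Real.sqrt_mul hXnn, Real.sqrt_sq hδ.le]
  rw [hmul]
  exact Real.sqrt_le_sqrt (by linarith [hfinal])
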